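/- Let a ∈ GF(Q)* with A_m(a) = 0. Then the set of all solutions in the algebraic closure of GF(p) to x^{q+1} + x + a = 0 equals { x^{q-1} : x ∈ G_1(G_2(GF(q^N))) } \ {0}. -/

import Mathlib

open Polynomial

lemma root_set_card_le {K : Type*} [Field K] (P : K[X]) (hP : P ≠ 0) (S : Set K)
    (h : ∀ x ∈ S, P.eval x = 0) : S.Finite ∧ S.ncard ≤ P.natDegree := by
  classical
  have hsub : S ⊆ ↑P.roots.toFinset := by
    intro x hx
    simp only [Finset.coe_sort_coe, Multiset.mem_toFinset, Finset.mem_coe, mem_roots, hP,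
      IsRoot, ne_eq, not_false_eq_true, true_and]
    exact h x hx
  have hfin : S.Finite := Set.Finite.subset (P.roots.toFinset).finite_toSet hsub
  refine ⟨hfin, ?_⟩
  calc S.ncard ≤ (↑P.roots.toFinset : Set K).ncard :=
        Set.ncard_le_ncard hsub (P.roots.toFinset).finite_toSet
    _ = P.roots.toFinset.card := Set.ncard_coe_finset _
    _ ≤ Multiset.card P.roots := Multiset.toFinset_card_le _
    _ ≤ P.natDegree := P.card_roots'

lemma root_set_card_eq {K : Type*} [Field K] [IsAlgClosed K] (P : K[X]) (hP : P ≠ 0)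
    (hsep : P.Separable) : {x : K | P.eval x = 0}.ncard = P.natDegree := by
  classical
  have hset : {x : K | P.eval x = 0} = ↑P.roots.toFinset := by
    ext x
    simp only [Set.mem_setOf_eq, Finset.coe_sort_coe, Multiset.mem_toFinset, Finset.mem_coe,
      mem_roots, hP, IsRoot, ne_eq, not_false_eq_true, true_and]
  rw [hset, Set.ncard_coe_finset, Multiset.toFinset_card_of_nodup (Polynomial.nodup_roots hsep),
    Polynomial.splits_iff_card_roots.mp (IsAlgClosed.splits P)]

lemma pow_pow_fix {K : Type*} [CommMonoid K] {p j : ℕ} {x : K} (h : x ^ p ^ j = x) :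
    ∀ t, x ^ p ^ (j * t) = x := by
  intro t
  induction t with
  | zero => simp
  | succ t ih =>
      have he : p ^ (j * (t + 1)) = p ^ (j * t) * p ^ j := by
        rw [← pow_add]; ring_nf
      rw [he, pow_mul, ih, h]

lemma fix_gcd {K : Type*} [Field K] (p : ℕ) [Fact p.Prime] [CharP K p] :
    ∀ k n : ℕ, ∀ x : K, x ^ p ^ k = x → x ^ p ^ n = x → x ^ p ^ Nat.gcd k n = x := by
  intro k n
  induction k, n using Nat.gcd.induction with
  | H0 n => intro x _ h2; simpa using h2
  | H1 k n hk ih =>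
      intro x h1 h2
      rw [Nat.gcd_rec]
      refine ih x ?_ h1
      -- show x ^ p ^ (n % k) = x
      have hinj : Function.Injective (iterateFrobenius K p (k * (n / k))) :=
        (iterateFrobenius K p (k * (n / k))).injective
      apply hinj
      have hkt : x ^ p ^ (k * (n / k)) = x := pow_pow_fix h1 (n / k)
      rw [iterateFrobenius_def, iterateFrobenius_def, ← pow_mul, ← pow_add, hkt]
      rw [Nat.mod_add_div n k]
      exact h2

lemma addsubgroup_card_eq {K : Type*} [AddCommGroup K] (S : AddSubgroup K) [Finite S]
    (ψ : ↥S →+ K) : Nat.card S = Nat.card ψ.range * Nat.card ψ.ker := by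
  rw [AddSubgroup.card_eq_card_quotient_mul_card_addSubgroup ψ.ker]
  congr 1
  exact (Nat.card_congr (QuotientAddGroup.quotientKerEquivRange ψ).toEquiv)

lemma frob_aeval {p : ℕ} [Fact p.Prime] {K : Type*} [Field K] [Algebra (ZMod p) K] [CharP K p]
    (P : (ZMod p)[X]) (x : K) (s : ℕ) :
    (aeval x P) ^ p ^ s = aeval (x ^ p ^ s) P := by
  have h := Polynomial.hom_eval₂ P (algebraMap (ZMod p) K) (iterateFrobenius K p s) x
  rw [RingHom.ext_zmod ((iterateFrobenius K p s).comp (algebraMap (ZMod p) K))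
    (algebraMap (ZMod p) K)] at h
  rw [aeval_def, aeval_def, ← iterateFrobenius_def p s, h, iterateFrobenius_def]

lemma ker_card_eq_ncard {K : Type*} [AddCommGroup K] (S : AddSubgroup K) (f : K →+ K) :
    Nat.card ((f.comp S.subtype).ker) = Set.ncard {x : K | x ∈ S ∧ f x = 0} := by
  rw [← Nat.card_coe_set_eq]
  apply Nat.card_congr
  refine ⟨fun y => ⟨y.1.1, y.1.2, by
      have h2 := y.2
      simp only [AddMonoidHom.mem_ker, AddMonoidHom.comp_apply, AddSubgroup.coe_subtype] at h2
      exact h2⟩,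
    fun y => ⟨⟨y.1, y.2.1⟩, by
      simp only [AddMonoidHom.mem_ker, AddMonoidHom.comp_apply, AddSubgroup.coe_subtype]
      exact y.2.2⟩, fun y => rfl, fun y => rfl⟩

lemma range_card_eq_ncard {K : Type*} [AddCommGroup K] (S : AddSubgroup K) (f : K →+ K) :
    Nat.card ((f.comp S.subtype).range) = Set.ncard (f '' (S : Set K)) := by
  rw [← Nat.card_coe_set_eq]
  apply Nat.card_congr
  apply Equiv.subtypeEquivRight
  intro x
  simp only [AddMonoidHom.mem_range, AddMonoidHom.comp_apply, AddSubgroup.coe_subtype,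
    Set.mem_image, SetLike.mem_coe]
  constructor
  · rintro ⟨y, hy⟩; exact ⟨y.1, y.2, hy⟩
  · rintro ⟨y, hy, h⟩; exact ⟨⟨y, hy⟩, h⟩

lemma range_mem_of {K : Type*} [AddCommGroup K] (S : AddSubgroup K) (f : K →+ K)
    (x : K) (hx : x ∈ S) : f x ∈ (f.comp S.subtype).range :=
  ⟨⟨x, hx⟩, rfl⟩

set_option maxHeartbeats 4000000 in
theorem stmt_14 (p k n : ℕ) [Fact p.Prime] (hk : 1 ≤ k) (hn : 1 ≤ n)
    (d m q Q N : ℕ) (hd : d = Nat.gcd n k) (hm : m = n / d)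
    (hq : q = p ^ k) (hQ : Q = p ^ n) (hN : N = m * (p ^ d - 1))
    (A : ℕ → Polynomial (ZMod p)) (hA1 : A 1 = 1) (hA2 : A 2 = -1)
    (hA : ∀ r : ℕ, 1 ≤ r → A (r + 2) = -(A (r + 1)) ^ q - X ^ q * A r ^ q ^ 2)
    (a : AlgebraicClosure (ZMod p)) (haQ : a ^ Q = a) (ha0 : a ≠ 0)
    (B : ℕ → AlgebraicClosure (ZMod p)) (hB1 : B 1 = 0)
    (hB : ∀ r : ℕ, 1 ≤ r → B (r + 1) = -a * (aeval a (A r)) ^ q)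
    (hma : aeval a (A m) = 0)
    (g1 g2 : AlgebraicClosure (ZMod p) → AlgebraicClosure (ZMod p))
    (hg1 : ∀ x, g1 x = ∑ i ∈ Finset.Icc 1 (m - 1),
        (aeval a (A (m - i))) ^ q ^ i * x ^ q ^ (i - 1))
    (hg2 : ∀ x, g2 x = ∑ i ∈ Finset.range (p ^ d - 1),
        B m ^ (p ^ d - 2 - i) * x ^ q ^ (m * i)) :
    {x : AlgebraicClosure (ZMod p) | x ^ (q + 1) + x + a = 0} =
      {y : AlgebraicClosure (ZMod p) | ∃ x : AlgebraicClosure (ZMod p),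
        x ^ q ^ N = x ∧ y = (g1 (g2 x)) ^ (q - 1)} \ {0} := by
  classical
  have hp : p.Prime := Fact.out
  have hq1 : 1 < q := by subst hq; exact Nat.one_lt_pow (by omega) hp.one_lt
  have hdn : d ∣ n := hd ▸ Nat.gcd_dvd_left n k
  have hdk : d ∣ k := hd ▸ Nat.gcd_dvd_right n k
  have hd1 : 1 ≤ d := by
    subst hd; exact Nat.gcd_pos_of_pos_left k hn
  have hpd2 : 2 ≤ p ^ d := by
    calc 2 = 2 ^ 1 := rfl
    _ ≤ 2 ^ d := Nat.pow_le_pow_right (by omega) hd1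
    _ ≤ p ^ d := Nat.pow_le_pow_left hp.two_le d
  have hm1 : 1 ≤ m := by
    subst hm
    exact Nat.div_pos (Nat.le_of_dvd hn hdn) (by omega)
  -- the evaluated A-sequence
  set al : ℕ → AlgebraicClosure (ZMod p) := fun r => aeval a (A r) with hal
  have hal1 : al 1 = 1 := by simp [hal, hA1]
  have hal2 : al 2 = -1 := by simp [hal, hA2]
  have halrec : ∀ r, 1 ≤ r → al (r + 2) = -(al (r + 1)) ^ q - a ^ q * (al r) ^ q ^ 2 := by
    intro r hr
    simp [hal, hA r hr, map_pow]
  have halm : al m = 0 := hma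
  have hm3 : 3 ≤ m := by
    by_contra hcon
    push_neg at hcon
    interval_cases m
    · rw [hal1] at halm; exact one_ne_zero halm
    · rw [hal2] at halm
      exact one_ne_zero (neg_eq_zero.mp halm)
  -- power helpers
  have hqp : ∀ j, q ^ j = p ^ (k * j) := by
    intro j; rw [hq, ← pow_mul]
  have hadd : ∀ (j : ℕ) (x y : AlgebraicClosure (ZMod p)),
      (x + y) ^ q ^ j = x ^ q ^ j + y ^ q ^ j := by
    intro j x y; rw [hqp j]; exact add_pow_char_pow x y p (k * j)
  have hsub : ∀ (j : ℕ) (x y : AlgebraicClosure (ZMod p)),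
      (x - y) ^ q ^ j = x ^ q ^ j - y ^ q ^ j := by
    intro j x y; rw [hqp j]; exact sub_pow_char_pow x y (k * j)
  have hadd1 : ∀ (x y : AlgebraicClosure (ZMod p)), (x + y) ^ q = x ^ q + y ^ q := by
    intro x y; have := hadd 1 x y; rwa [pow_one] at this
  have hpowpow : ∀ (x : AlgebraicClosure (ZMod p)) (i j : ℕ),
      (x ^ q ^ i) ^ q ^ j = x ^ q ^ (i + j) := by
    intro x i j; rw [← pow_mul, ← pow_add]
  -- fixedness facts
  have hap : a ^ p ^ n = a := by rw [← hQ]; exact haQ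
  have hkm : k * m = n * (k / d) := by
    subst hm
    rw [← Nat.mul_div_assoc k hdn, ← Nat.mul_div_assoc n hdk, mul_comm k n]
  have haqm : a ^ q ^ m = a := by
    rw [hqp m, hkm]; exact pow_pow_fix hap (k / d)
  have halfixn : ∀ r, (al r) ^ p ^ n = al r := by
    intro r; rw [hal]; rw [frob_aeval, hap]
  have halqm : ∀ r, (al r) ^ q ^ m = al r := by
    intro r; rw [hqp m, hkm]; exact pow_pow_fix (halfixn r) (k / d)
  have hBm : B m = -a * (al (m - 1)) ^ q := by
    have h := hB (m - 1) (by omega)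
    rw [show m - 1 + 1 = m by omega] at h
    exact h
  have hfrn : ∀ x : AlgebraicClosure (ZMod p),
      iterateFrobenius (AlgebraicClosure (ZMod p)) p n x = x ^ p ^ n :=
    iterateFrobenius_def p n
  have hBfixn : (B m) ^ p ^ n = B m := by
    have h := map_mul (iterateFrobenius (AlgebraicClosure (ZMod p)) p n) (-a)
      ((al (m - 1)) ^ q)
    rw [map_neg, map_pow, hfrn, hfrn, hfrn, hap, halfixn] at h
    rw [hBm, h]
  have hBqm : (B m) ^ q ^ m = B m := by
    rw [hqp m, hkm]; exact pow_pow_fix hBfixn (k / d)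
  -- coefficient recurrence
  have hcrec : ∀ r, 1 ≤ r → al (r + 1) = (B r) ^ q - (al r) ^ q := by
    intro r hr
    obtain ⟨s, rfl⟩ : ∃ s, r = s + 1 := ⟨r - 1, by omega⟩
    cases s with
    | zero => rw [hal2, hal1, hB1]; simp [zero_pow (show q ≠ 0 by omega)]
    | succ t =>
        have h1 : (1 : ℕ) ≤ t + 1 := by omega
        have hrec := halrec (t + 1) h1
        have hb := hB (t + 1) h1
        have hbal : (aeval a (A (t + 1))) = al (t + 1) := rfl
        rw [hbal] at hb
        have hneg : ∀ u : AlgebraicClosure (ZMod p), (-u) ^ q = -(u ^ q) := by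
          intro u
          have h0 := hsub 1 0 u; rw [pow_one] at h0
          simpa [zero_pow (show q ≠ 0 by omega)] using h0
        rw [show t + 1 + 1 + 1 = t + 1 + 2 by omega, hrec, hb, neg_mul, hneg, mul_pow,
          pow_two, pow_mul]
        ring
  -- the key linear recurrence on the kernel of L_a
  have hL1 : ∀ x : AlgebraicClosure (ZMod p), x ^ q ^ 2 + x ^ q + a * x = 0 →
      ∀ r, 1 ≤ r → x ^ q ^ r = al r * x ^ q + B r * x := by
    intro x hx r hr
    have hx2 : x ^ q ^ 2 = -(x ^ q) - a * x := by linear_combination hx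
    induction r, hr using Nat.le_induction with
    | base => rw [pow_one, hal1, hB1]; ring
    | succ r hr ih =>
        have hstep : x ^ q ^ (r + 1) = (x ^ q ^ r) ^ q := by
          rw [← pow_mul, pow_succ]
        have hbal : (aeval a (A r)) = al r := rfl
        have hb := hB r hr
        rw [hbal] at hb
        rw [hstep, ih, hadd1, mul_pow, mul_pow, ← pow_mul, ← pow_two, hx2,
          hcrec r hr, hb]
        ring
  
  have hq0 : q ≠ 0 := by omega
  have hqK : ((q : ℕ) : AlgebraicClosure (ZMod p)) = 0 := by
    rw [hq]; push_cast
    rw [CharP.cast_eq_zero (AlgebraicClosure (ZMod p)) p]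
    exact zero_pow (by omega)
  have hN1 : 1 ≤ N := by
    have : 1 ≤ p ^ d - 1 := by omega
    subst hN; exact Nat.mul_pos (by omega) this
  -- cardinality of the root set of L_a
  have hVcard : Set.ncard {x : AlgebraicClosure (ZMod p) |
      x ^ q ^ 2 + x ^ q + a * x = 0} = q ^ 2 := by
    have h1 : q < q ^ 2 := by nlinarith
    set P : Polynomial (AlgebraicClosure (ZMod p)) := X ^ q ^ 2 + X ^ q + C a * X with hP
    have heval : ∀ x, P.eval x = x ^ q ^ 2 + x ^ q + a * x := by
      intro x; simp [hP]
    have hdeg : P.natDegree = q ^ 2 := by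
      rw [hP]; compute_degree!
      case coeff_ne_zero => simp [show q ^ 2 ≠ q by omega, show q ^ 2 ≠ 1 by omega, show q ≠ 1 by omega]
      all_goals omega
    have hP0 : P ≠ 0 := by
      intro h; rw [h] at hdeg; simp at hdeg
      exact pow_ne_zero 2 hq0 hdeg.symm
    have hq2K : ((q ^ 2 : ℕ) : AlgebraicClosure (ZMod p)) = 0 := by
      push_cast; rw [hqK]; exact zero_pow (by omega)
    have hder : derivative P = C a := by
      rw [hP, derivative_add, derivative_add, derivative_X_pow, derivative_X_pow,
        derivative_C_mul, derivative_X, hq2K, hqK, map_zero, zero_mul, zero_mul, mul_one]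
      ring
    have hsep : P.Separable := by
      rw [Polynomial.separable_def, hder]
      have hu : IsUnit (C a : Polynomial (AlgebraicClosure (ZMod p))) :=
        isUnit_C.mpr (isUnit_iff_ne_zero.mpr ha0)
      have h := (isCoprime_mul_unit_left_right hu P 1).mpr isCoprime_one_right
      simpa using h
    have hsets : {x : AlgebraicClosure (ZMod p) | x ^ q ^ 2 + x ^ q + a * x = 0}
        = {x : AlgebraicClosure (ZMod p) | P.eval x = 0} := by
      ext x; simp [heval]
    rw [hsets, root_set_card_eq P hP0 hsep, hdeg]
  -- cardinality of GF(q^N)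
  have hEcard : Set.ncard {x : AlgebraicClosure (ZMod p) | x ^ q ^ N = x} = q ^ N := by
    have h1 : 1 < q ^ N := Nat.one_lt_pow (by omega) hq1
    set P : Polynomial (AlgebraicClosure (ZMod p)) := X ^ q ^ N - X with hP
    have heval : ∀ x, P.eval x = x ^ q ^ N - x := by
      intro x; simp [hP]
    have hdeg : P.natDegree = q ^ N := by
      rw [hP]; compute_degree!
      case coeff_ne_zero =>
        rw [if_neg (by omega : ¬(1:ℕ) = q ^ N)]
        norm_num
      all_goals omega
    have hP0 : P ≠ 0 := by
      intro h; rw [h] at hdeg; simp at hdeg; omega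
    have hqNK : ((q ^ N : ℕ) : AlgebraicClosure (ZMod p)) = 0 := by
      push_cast; rw [hqK]; exact zero_pow (by omega)
    have hder : derivative P = C (-1) := by
      rw [hP, derivative_sub, derivative_X_pow, derivative_X, hqNK, map_zero, zero_mul]
      simp
    have hsep : P.Separable := by
      rw [Polynomial.separable_def, hder]
      have hu : IsUnit (C (-1) : Polynomial (AlgebraicClosure (ZMod p))) :=
        isUnit_C.mpr (by simp)
      have h := (isCoprime_mul_unit_left_right hu P 1).mpr isCoprime_one_right
      simpa using h
    have hsets : {x : AlgebraicClosure (ZMod p) | x ^ q ^ N = x}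
        = {x : AlgebraicClosure (ZMod p) | P.eval x = 0} := by
      ext x; simp [heval, sub_eq_zero]
    rw [hsets, root_set_card_eq P hP0 hsep, hdeg]
  -- the set W is finite with at most q^m elements
  have hWq1 : 1 < q ^ m := Nat.one_lt_pow (by omega) hq1
  have hWfin : {x : AlgebraicClosure (ZMod p) | x ^ q ^ m = B m * x}.Finite ∧
      {x : AlgebraicClosure (ZMod p) | x ^ q ^ m = B m * x}.ncard ≤ q ^ m := by
    set P : Polynomial (AlgebraicClosure (ZMod p)) := X ^ q ^ m - C (B m) * X with hP
    have hP0 : P ≠ 0 := by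
      intro h
      have hc := congrArg (fun Q => Polynomial.coeff Q (q ^ m)) h
      simp [hP, coeff_X_pow, coeff_C_mul, coeff_X, show ¬(1 = q ^ m) by omega] at hc
    have hdeg : P.natDegree ≤ q ^ m := by
      rw [hP]
      refine le_trans (natDegree_sub_le _ _) ?_
      refine max_le (le_of_eq (natDegree_X_pow _)) ?_
      exact le_trans (le_trans (natDegree_C_mul_le _ _) natDegree_X_le) (by omega)
    have h := root_set_card_le P hP0 {x | x ^ q ^ m = B m * x} ?_
    · exact ⟨h.1, le_trans h.2 hdeg⟩
    · intro x hx
      simp only [Set.mem_setOf_eq] at hx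
      simp [hP, hx]
  -- V is closed under multiplication by B m
  have hVqm : ∀ x : AlgebraicClosure (ZMod p), x ^ q ^ 2 + x ^ q + a * x = 0 →
      x ^ q ^ m = B m * x := by
    intro x hx
    have h := hL1 x hx m (by omega)
    rw [halm] at h; rw [h]; ring
  have hVmul : ∀ x : AlgebraicClosure (ZMod p), x ^ q ^ 2 + x ^ q + a * x = 0 →
      (B m * x) ^ q ^ 2 + (B m * x) ^ q + a * (B m * x) = 0 := by
    intro x hx
    rw [← hVqm x hx]
    have hexp : (x ^ q ^ 2 + x ^ q + a * x) ^ q ^ m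
        = (x ^ q ^ m) ^ q ^ 2 + (x ^ q ^ m) ^ q + a * x ^ q ^ m := by
      rw [hadd m, hadd m, mul_pow, haqm, hpowpow, hpowpow]
      rw [show (x ^ q) ^ q ^ m = (x ^ q ^ m) ^ q by
        rw [show x ^ q = x ^ q ^ 1 from by rw [pow_one], hpowpow,
          show (x ^ q ^ m) ^ q = (x ^ q ^ m) ^ q ^ 1 from by rw [pow_one], hpowpow,
          show (1 : ℕ) + m = m + 1 by omega]]
      rw [show (2 : ℕ) + m = m + 2 by omega, ← hpowpow]
    rw [← hexp, hx]
    exact zero_pow (pow_ne_zero m hq0)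
  -- a nonzero element of V
  have hx0 : ∃ x : AlgebraicClosure (ZMod p),
      (x ^ q ^ 2 + x ^ q + a * x = 0) ∧ x ≠ 0 := by
    by_contra hcon
    push_neg at hcon
    have hsub0 : {x : AlgebraicClosure (ZMod p) | x ^ q ^ 2 + x ^ q + a * x = 0} ⊆ {0} := by
      intro x hx
      exact hcon x hx
    have := Set.ncard_le_ncard hsub0 (Set.finite_singleton 0)
    rw [hVcard, Set.ncard_singleton] at this
    nlinarith
  -- B m lies in GF(q)
  have hBq : (B m) ^ q = B m := by
    by_contra hne
    obtain ⟨x0, hx0V, hx00⟩ := hx0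
    have hstar : ∀ x : AlgebraicClosure (ZMod p), x ^ q ^ 2 + x ^ q + a * x = 0 →
        ((B m) ^ q ^ 2 - B m) * x ^ q ^ 2 + ((B m) ^ q - B m) * x ^ q = 0 := by
      intro x hx
      have h1 := hVmul x hx
      rw [mul_pow, mul_pow] at h1
      linear_combination h1 - (B m) * hx
    by_cases hq2eq : (B m) ^ q ^ 2 = B m
    · have h := hstar x0 hx0V
      rw [hq2eq, sub_self, zero_mul, zero_add, mul_eq_zero] at h
      rcases h with h | h
      · exact hne (by linear_combination h)
      · exact hx00 (pow_eq_zero_iff hq0 |>.mp h)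
    · -- every element of V is a root of a polynomial of degree at most q
      set mu : AlgebraicClosure (ZMod p) :=
        -(((B m) ^ q - B m) / ((B m) ^ q ^ 2 - B m)) with hmu
      have hBd0 : (B m) ^ q ^ 2 - B m ≠ 0 := sub_ne_zero.mpr hq2eq
      have hmux : ∀ x : AlgebraicClosure (ZMod p), x ^ q ^ 2 + x ^ q + a * x = 0 →
          x ^ q ^ 2 = mu * x ^ q := by
        intro x hx
        have h := hstar x hx
        rw [hmu]
        field_simp
        linear_combination h
      set P : Polynomial (AlgebraicClosure (ZMod p)) := C (mu + 1) * X ^ q + C a * X with hP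
      have hP0 : P ≠ 0 := by
        intro h
        have hc : (C (mu + 1) * X ^ q + C a * X :
            Polynomial (AlgebraicClosure (ZMod p))).coeff 1 = 0 := by
          rw [← hP, h]; simp
        rw [coeff_add, coeff_C_mul, coeff_C_mul, coeff_X_pow, coeff_X_one,
          if_neg (show ¬(1 = q) by omega), mul_zero, zero_add, mul_one] at hc
        exact ha0 hc
      have hdeg : P.natDegree ≤ q := by
        rw [hP]
        refine le_trans (natDegree_add_le _ _) (max_le ?_ ?_)
        · exact le_trans (natDegree_C_mul_le _ _) (le_of_eq (natDegree_X_pow _))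
        · exact le_trans (le_trans (natDegree_C_mul_le _ _) natDegree_X_le) (by omega)
      have h := root_set_card_le P hP0
        {x : AlgebraicClosure (ZMod p) | x ^ q ^ 2 + x ^ q + a * x = 0} ?_
      · have := le_trans h.2 hdeg
        rw [hVcard] at this
        nlinarith
      · intro x hx
        have hmu1 := hmux x hx
        simp only [Set.mem_setOf_eq] at hx
        simp only [hP, eval_add, eval_mul, eval_C, eval_pow, eval_X]
        linear_combination hx - hmu1
  -- B m is nonzero
  have halm1 : al (m - 1) ≠ 0 := by
    intro hzero
    have hstep : ∀ r, 1 ≤ r → al (r + 2) = 0 → al (r + 1) = 0 → al r = 0 := by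
      intro r hr h2 h1
      have h := halrec r hr
      rw [h2, h1, zero_pow hq0] at h
      have : a ^ q * al r ^ q ^ 2 = 0 := by linear_combination h
      rcases mul_eq_zero.mp this with h' | h'
      · exact absurd h' (pow_ne_zero q ha0)
      · exact pow_eq_zero_iff (pow_ne_zero 2 hq0) |>.mp h'
    have key : ∀ s, s ≤ m - 2 → al (m - s) = 0 ∧ al (m - s - 1) = 0 := by
      intro s
      induction s with
      | zero => intro _; exact ⟨by simpa using halm, by simpa using hzero⟩
      | succ t ih =>
          intro hts
          obtain ⟨h2, h1⟩ := ih (by omega)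
          have hr1 : 1 ≤ m - t - 2 := by omega
          have h2' : al (m - t - 2 + 2) = 0 := by
            rw [show m - t - 2 + 2 = m - t by omega]; exact h2
          have h1' : al (m - t - 2 + 1) = 0 := by
            rw [show m - t - 2 + 1 = m - t - 1 by omega]; exact h1
          have := hstep (m - t - 2) hr1 h2' h1'
          constructor
          · rw [show m - (t + 1) = m - t - 1 by omega]; exact h1
          · rw [show m - (t + 1) - 1 = m - t - 2 by omega]; exact this
    obtain ⟨h2, h1⟩ := key (m - 2) (le_refl _)
    rw [show m - (m - 2) - 1 = 1 by omega] at h1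
    rw [hal1] at h1
    exact one_ne_zero h1
  have hB0 : B m ≠ 0 := by
    rw [hBm]
    intro h
    rcases mul_eq_zero.mp h with h' | h'
    · exact ha0 (neg_eq_zero.mp h')
    · exact halm1 (pow_eq_zero_iff hq0 |>.mp h')
  -- B m lies in GF(p^d)
  have hBd : (B m) ^ p ^ d = B m := by
    have h1 : (B m) ^ p ^ k = B m := by rw [← hq]; exact hBq
    have h := fix_gcd p n k (B m) hBfixn h1
    rwa [← hd] at h
  have hBe : (B m) ^ (p ^ d - 1) = 1 := by
    have h : B m * (B m) ^ (p ^ d - 1) = B m * 1 := by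
      rw [mul_one, ← pow_succ']
      rw [show p ^ d - 1 + 1 = p ^ d by omega]
      exact hBd
    exact mul_left_cancel₀ hB0 h
  
  have hsub1 : ∀ (x y : AlgebraicClosure (ZMod p)), (x - y) ^ q = x ^ q - y ^ q := by
    intro x y; have h := hsub 1 x y; rwa [pow_one] at h
  have hnegj : ∀ (j : ℕ) (u : AlgebraicClosure (ZMod p)), (-u) ^ q ^ j = -(u ^ q ^ j) := by
    intro j u
    have h := hsub j 0 u
    simpa [zero_pow (pow_ne_zero j hq0)] using h
  -- expansion of powers of L_a
  have hLapow : ∀ (j : ℕ) (x : AlgebraicClosure (ZMod p)),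
      (x ^ q ^ 2 + x ^ q + a * x) ^ q ^ j
        = x ^ q ^ (j + 2) + x ^ q ^ (j + 1) + a ^ q ^ j * x ^ q ^ j := by
    intro j x
    rw [hadd j, hadd j, mul_pow, hpowpow,
      show (x ^ q) ^ q ^ j = x ^ q ^ (j + 1) from by
        rw [show x ^ q = x ^ q ^ 1 from by rw [pow_one], hpowpow,
          show (1 : ℕ) + j = j + 1 by omega],
      show (2 : ℕ) + j = j + 2 by omega]
  -- the telescoping partial sums
  have hpartial : ∀ x : AlgebraicClosure (ZMod p), ∀ t, 2 ≤ t → t ≤ m - 1 →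
      (∑ i ∈ Finset.Icc 1 t, al (m - i) ^ q ^ i * (x ^ q ^ 2 + x ^ q + a * x) ^ q ^ (i - 1))
        = al (m - t) ^ q ^ t * x ^ q ^ (t + 1)
          + (al (m - t + 1) ^ q ^ (t - 1) + al (m - t) ^ q ^ t) * x ^ q ^ t
          - al m * x ^ q - B m * x := by
    intro x t ht
    induction t, ht using Nat.le_induction with
    | base =>
        intro htm
        have e1 : al m = -al (m - 1) ^ q - a ^ q * al (m - 2) ^ q ^ 2 := by
          have h := halrec (m - 2) (by omega)
          rw [show m - 2 + 2 = m by omega, show m - 2 + 1 = m - 1 by omega] at h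
          exact h
        rw [show Finset.Icc 1 2 = {1, 2} from rfl, Finset.sum_pair (by norm_num : (1:ℕ) ≠ 2)]
        rw [show m - 2 + 1 = m - 1 by omega]
        simp only [show (1:ℕ) - 1 = 0 from rfl, show (2:ℕ) - 1 = 1 from rfl,
          pow_zero, pow_one]
        rw [hadd1 (x ^ q ^ 2 + x ^ q) (a * x), hadd1 (x ^ q ^ 2) (x ^ q), mul_pow]
        rw [show (x ^ q ^ 2) ^ q = x ^ q ^ (2 + 1) from by
          rw [show (x ^ q ^ 2) ^ q = (x ^ q ^ 2) ^ q ^ 1 from by rw [pow_one], hpowpow]]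
        rw [show (x ^ q) ^ q = x ^ q ^ 2 from by rw [← pow_mul, ← pow_two]]
        linear_combination (x ^ q) * e1 + x * hBm
    | succ t ht ih =>
        intro htm
        rw [Finset.sum_Icc_succ_top (by omega : 1 ≤ t + 1), ih (by omega)]
        rw [show t + 1 - 1 = t by omega, hLapow t]
        rw [show m - (t + 1) + 1 = m - t by omega, show m - (t + 1) = m - t - 1 by omega,
          show t + 1 + 1 = t + 2 by omega]
        have h := halrec (m - t - 1) (by omega)
        rw [show m - t - 1 + 2 = m - t + 1 by omega, show m - t - 1 + 1 = m - t by omega] at h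
        have e2 : al (m - t + 1) ^ q ^ (t - 1)
            = -(al (m - t) ^ q ^ t) - a ^ q ^ t * al (m - t - 1) ^ q ^ (t + 1) := by
          rw [h]
          rw [show -al (m - t) ^ q - a ^ q * al (m - t - 1) ^ q ^ 2
              = (0 - al (m - t) ^ q) - a ^ q * al (m - t - 1) ^ q ^ 2 by ring]
          rw [hsub (t - 1), hsub (t - 1), mul_pow]
          rw [zero_pow (pow_ne_zero _ hq0)]
          rw [show al (m - t) ^ q = al (m - t) ^ q ^ 1 from by rw [pow_one], hpowpow,
            show a ^ q = a ^ q ^ 1 from by rw [pow_one], hpowpow, hpowpow,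
            show (1 : ℕ) + (t - 1) = t by omega, show (2 : ℕ) + (t - 1) = t + 1 by omega]
          ring
        linear_combination x ^ q ^ t * e2
  -- identity (A):  g1 (L_a x) = x^{q^m} - B m * x
  have hGLa : ∀ x : AlgebraicClosure (ZMod p),
      g1 (x ^ q ^ 2 + x ^ q + a * x) = x ^ q ^ m - B m * x := by
    intro x
    rw [hg1]
    have h := hpartial x (m - 1) (by omega) (le_refl _)
    rw [show m - (m - 1) = 1 by omega, show (1 : ℕ) + 1 = 2 from rfl,
      show m - 1 + 1 = m by omega, hal1, hal2, halm, one_pow] at h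
    rw [hnegj (m - 1 - 1) 1, one_pow] at h
    simp only [hal] at h
    rw [h]
    ring
  -- identity (B): commutation of F_1 and L_a
  have hBq2 : (B m) ^ q ^ 2 = B m := by
    rw [pow_two, pow_mul, hBq, hBq]
  have hcommF : ∀ x : AlgebraicClosure (ZMod p),
      (x ^ q ^ m - B m * x) ^ q ^ 2 + (x ^ q ^ m - B m * x) ^ q + a * (x ^ q ^ m - B m * x)
        = (x ^ q ^ 2 + x ^ q + a * x) ^ q ^ m - B m * (x ^ q ^ 2 + x ^ q + a * x) := by
    intro x
    rw [hLapow m, haqm, hsub 2, hsub1, mul_pow, mul_pow, hBq2, hBq, hpowpow,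
      show (x ^ q ^ m) ^ q = x ^ q ^ (m + 1) from by
        rw [show (x ^ q ^ m) ^ q = (x ^ q ^ m) ^ q ^ 1 from by rw [pow_one], hpowpow]]
    ring
  -- surjectivity of L_a on the algebraic closure
  have hsurjLa : ∀ z : AlgebraicClosure (ZMod p),
      ∃ x, x ^ q ^ 2 + x ^ q + a * x = z := by
    intro z
    have h1 : q < q ^ 2 := by nlinarith
    set P : Polynomial (AlgebraicClosure (ZMod p)) :=
      X ^ q ^ 2 + X ^ q + C a * X - C z with hP
    have hdeg : P.natDegree = q ^ 2 := by
      rw [hP]; compute_degree!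
      case coeff_ne_zero =>
        simp [hq0, show q ^ 2 ≠ q by omega, show q ^ 2 ≠ 1 by omega, show q ≠ 1 by omega,
          show q ^ 2 ≠ 0 by omega]
      all_goals omega
    have hP0 : P ≠ 0 := by
      intro h; rw [h] at hdeg; simp at hdeg
      exact pow_ne_zero 2 hq0 hdeg.symm
    have hdegne : P.degree ≠ 0 := by
      rw [Polynomial.degree_eq_natDegree hP0, hdeg]
      exact_mod_cast pow_ne_zero 2 hq0
    obtain ⟨x, hx⟩ := IsAlgClosed.exists_root (p := P) hdegne
    refine ⟨x, ?_⟩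
    have hev : P.eval x = x ^ q ^ 2 + x ^ q + a * x - z := by
      simp [hP]
    rw [IsRoot, hev, sub_eq_zero] at hx
    exact hx
  -- identity (C): L_a (g1 w) = w^{q^m} - B m * w for every w
  have hLaG1 : ∀ w : AlgebraicClosure (ZMod p),
      (g1 w) ^ q ^ 2 + (g1 w) ^ q + a * (g1 w) = w ^ q ^ m - B m * w := by
    intro w
    obtain ⟨x, hx⟩ := hsurjLa w
    rw [← hx, hGLa x]
    exact hcommF x
  -- g2 maps GF(q^N) into W
  have hg2W : ∀ x : AlgebraicClosure (ZMod p), x ^ q ^ N = x →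
      (g2 x) ^ q ^ m = B m * g2 x := by
    intro x hx
    rw [hg2]
    have hphi : ∀ y : AlgebraicClosure (ZMod p),
        iterateFrobenius (AlgebraicClosure (ZMod p)) p (k * m) y = y ^ q ^ m := by
      intro y; rw [iterateFrobenius_def, hqp m]
    have hpow : (∑ i ∈ Finset.range (p ^ d - 1),
          B m ^ (p ^ d - 2 - i) * x ^ q ^ (m * i)) ^ q ^ m
        = ∑ i ∈ Finset.range (p ^ d - 1),
          B m ^ (p ^ d - 2 - i) * x ^ q ^ (m * (i + 1)) := by
      rw [← hphi, map_sum]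
      refine Finset.sum_congr rfl ?_
      intro i _
      rw [map_mul, map_pow, hphi, hphi, hBqm, hpowpow,
        show m * i + m = m * (i + 1) by ring]
    rw [hpow, Finset.mul_sum]
    have hsum := Finset.sum_range_sub
      (fun j => B m ^ (p ^ d - 1 - j) * x ^ q ^ (m * j)) (p ^ d - 1)
    have hfe : B m ^ (p ^ d - 1 - (p ^ d - 1)) * x ^ q ^ (m * (p ^ d - 1)) = x := by
      rw [show p ^ d - 1 - (p ^ d - 1) = 0 by omega, pow_zero, one_mul, ← hN, hx]
    have hf0 : B m ^ (p ^ d - 1 - 0) * x ^ q ^ (m * 0) = x := by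
      rw [Nat.sub_zero, hBe, one_mul, Nat.mul_zero, pow_zero, pow_one]
    rw [hfe, hf0, sub_self] at hsum
    rw [← sub_eq_zero, ← Finset.sum_sub_distrib, ← hsum]
    refine Finset.sum_congr rfl ?_
    intro i hi
    rw [Finset.mem_range] at hi
    rw [show p ^ d - 1 - (i + 1) = p ^ d - 2 - i by omega,
      show B m * (B m ^ (p ^ d - 2 - i) * x ^ q ^ (m * i))
        = B m ^ (p ^ d - 2 - i + 1) * x ^ q ^ (m * i) from by rw [pow_succ]; ring,
      show p ^ d - 2 - i + 1 = p ^ d - 1 - i by omega]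
  
  have hneg1 : ∀ u : AlgebraicClosure (ZMod p), (-u) ^ q = -(u ^ q) := by
    intro u; have h := hnegj 1 u; rwa [pow_one] at h
  have hqN1 : 1 < q ^ N := Nat.one_lt_pow (by omega) hq1
  -- finiteness of the three root sets
  have hEfin : {x : AlgebraicClosure (ZMod p) | x ^ q ^ N = x}.Finite := by
    have hP0 : (X ^ q ^ N - X : Polynomial (AlgebraicClosure (ZMod p))) ≠ 0 := by
      intro h
      have hc := congrArg (fun Q => Polynomial.coeff Q (q ^ N)) h
      simp [coeff_X_pow, coeff_X, show ¬(1 = q ^ N) by omega] at hc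
    exact (root_set_card_le _ hP0 _ (fun x hx => by
      simp only [Set.mem_setOf_eq] at hx
      simp [hx])).1
  have hVfin : {x : AlgebraicClosure (ZMod p) | x ^ q ^ 2 + x ^ q + a * x = 0}.Finite := by
    have h1 : q < q ^ 2 := by nlinarith
    have hP0 : (X ^ q ^ 2 + X ^ q + C a * X : Polynomial (AlgebraicClosure (ZMod p))) ≠ 0 := by
      intro h
      have hc := congrArg (fun Q => Polynomial.coeff Q (q ^ 2)) h
      simp [coeff_X_pow, coeff_C_mul, coeff_X, show ¬(q ^ 2 = q) by omega,
        show ¬(q ^ 2 = 1) by omega, show ¬(1 = q ^ 2) by omega] at hc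
    exact (root_set_card_le _ hP0 _ (fun x hx => by
      simp only [Set.mem_setOf_eq] at hx
      simp [hx])).1
  -- the additive subgroups E and W
  set E : AddSubgroup (AlgebraicClosure (ZMod p)) :=
    { carrier := {x | x ^ q ^ N = x}
      zero_mem' := by
        simp only [Set.mem_setOf_eq]
        exact zero_pow (pow_ne_zero N hq0)
      add_mem' := by
        intro x y hx hy
        simp only [Set.mem_setOf_eq] at hx hy ⊢
        rw [hadd N, hx, hy]
      neg_mem' := by
        intro x hx
        simp only [Set.mem_setOf_eq] at hx ⊢
        rw [hnegj N, hx] } with hEdef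
  set Wg : AddSubgroup (AlgebraicClosure (ZMod p)) :=
    { carrier := {x | x ^ q ^ m = B m * x}
      zero_mem' := by
        simp only [Set.mem_setOf_eq]
        rw [zero_pow (pow_ne_zero m hq0), mul_zero]
      add_mem' := by
        intro x y hx hy
        simp only [Set.mem_setOf_eq] at hx hy ⊢
        rw [hadd m, hx, hy, mul_add]
      neg_mem' := by
        intro x hx
        simp only [Set.mem_setOf_eq] at hx ⊢
        rw [hnegj m, hx, mul_neg] } with hWdef
  haveI hEfinI : Finite E := Set.Finite.to_subtype hEfin
  haveI hWfinI : Finite Wg := Set.Finite.to_subtype hWfin.1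
  -- g1 and g2 as additive maps
  have hg20 : g2 0 = 0 := by
    rw [hg2]
    refine Finset.sum_eq_zero ?_
    intro i _
    rw [zero_pow (pow_ne_zero _ hq0), mul_zero]
  have hg2add : ∀ x y, g2 (x + y) = g2 x + g2 y := by
    intro x y
    rw [hg2, hg2, hg2, ← Finset.sum_add_distrib]
    refine Finset.sum_congr rfl ?_
    intro i _
    rw [hadd (m * i), mul_add]
  have hg10 : g1 0 = 0 := by
    rw [hg1]
    refine Finset.sum_eq_zero ?_
    intro i _
    rw [zero_pow (pow_ne_zero _ hq0), mul_zero]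
  have hg1add : ∀ x y, g1 (x + y) = g1 x + g1 y := by
    intro x y
    rw [hg1, hg1, hg1, ← Finset.sum_add_distrib]
    refine Finset.sum_congr rfl ?_
    intro i _
    rw [hadd (i - 1), mul_add]
  set G1h : AlgebraicClosure (ZMod p) →+ AlgebraicClosure (ZMod p) :=
    { toFun := g1, map_zero' := hg10, map_add' := hg1add } with hG1def
  set G2h : AlgebraicClosure (ZMod p) →+ AlgebraicClosure (ZMod p) :=
    { toFun := g2, map_zero' := hg20, map_add' := hg2add } with hG2def
  have hG1coe : ∀ x, G1h x = g1 x := fun _ => rfl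
  have hG2coe : ∀ x, G2h x = g2 x := fun _ => rfl
  -- cardinalities of E
  have hcardE : Nat.card E = q ^ N := by
    rw [← hEcard]
    exact Nat.card_congr (Equiv.subtypeEquivRight fun x => Iff.rfl)
  -- kernel bound for g2 on E
  have hker2le : Set.ncard {x : AlgebraicClosure (ZMod p) | x ∈ E ∧ G2h x = 0}
      ≤ q ^ (m * (p ^ d - 2)) := by
    set P : Polynomial (AlgebraicClosure (ZMod p)) :=
      ∑ i ∈ Finset.range (p ^ d - 1), C (B m ^ (p ^ d - 2 - i)) * X ^ q ^ (m * i) with hP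
    have heval : ∀ x, P.eval x = g2 x := by
      intro x
      rw [hP, Polynomial.eval_finset_sum, hg2]
      refine Finset.sum_congr rfl ?_
      intro i _
      simp
    have hPne : P ≠ 0 := by
      intro h
      have hc := congrArg (fun Q => Polynomial.coeff Q (q ^ (m * (p ^ d - 2)))) h
      simp only [hP, Polynomial.finset_sum_coeff, coeff_C_mul, coeff_X_pow,
        Polynomial.coeff_zero] at hc
      have hval : ∀ i ∈ Finset.range (p ^ d - 1), i ≠ p ^ d - 2 →
          B m ^ (p ^ d - 2 - i) *
            (if q ^ (m * (p ^ d - 2)) = q ^ (m * i) then (1 : AlgebraicClosure (ZMod p))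
              else 0) = 0 := by
        intro i _ hine
        rw [if_neg, mul_zero]
        intro heq
        have h1 := Nat.pow_right_injective hq1 heq
        exact hine (Nat.eq_of_mul_eq_mul_left (by omega) h1).symm
      rw [Finset.sum_eq_single_of_mem (p ^ d - 2)
        (Finset.mem_range.mpr (by omega)) hval] at hc
      rw [if_pos rfl, Nat.sub_self, pow_zero, one_mul] at hc
      exact one_ne_zero hc
    have hdegle : P.natDegree ≤ q ^ (m * (p ^ d - 2)) := by
      rw [hP]
      refine Polynomial.natDegree_sum_le_of_forall_le _ _ ?_
      intro i hi
      rw [Finset.mem_range] at hi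
      refine le_trans (natDegree_C_mul_le _ _) ?_
      rw [natDegree_X_pow]
      exact Nat.pow_le_pow_right (by omega) (Nat.mul_le_mul_left m (by omega))
    have h := root_set_card_le P hPne {x | x ∈ E ∧ G2h x = 0} ?_
    · exact le_trans h.2 hdegle
    · intro x hx
      rw [heval]
      rw [← hG2coe]
      exact hx.2
  -- counting: the image of E under g2 is exactly W
  have hNsplit : N = m * (p ^ d - 2) + m := by
    rw [hN, show p ^ d - 1 = (p ^ d - 2) + 1 by omega, Nat.mul_succ]
  have hcnt2 := addsubgroup_card_eq E (G2h.comp E.subtype)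
  have hker2' := ker_card_eq_ncard E G2h
  have hrange2' := range_card_eq_ncard E G2h
  rw [show ⇑G2h = g2 from rfl] at hrange2'
  have hrange2ge : q ^ m ≤ Nat.card (G2h.comp E.subtype).range := by
    have h1 : q ^ (m * (p ^ d - 2)) * q ^ m
        ≤ Nat.card (G2h.comp E.subtype).range * q ^ (m * (p ^ d - 2)) := by
      calc q ^ (m * (p ^ d - 2)) * q ^ m = q ^ N := by rw [hNsplit, pow_add]
      _ = Nat.card (G2h.comp E.subtype).range * Nat.card (G2h.comp E.subtype).ker := by
          rw [← hcardE, hcnt2]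
      _ ≤ Nat.card (G2h.comp E.subtype).range * q ^ (m * (p ^ d - 2)) := by
          refine Nat.mul_le_mul_left _ ?_
          rw [hker2']
          exact hker2le
    rw [mul_comm] at h1
    exact Nat.le_of_mul_le_mul_right h1 (by positivity)
  have hrange2sub : g2 '' (E : Set (AlgebraicClosure (ZMod p)))
      ⊆ {x : AlgebraicClosure (ZMod p) | x ^ q ^ m = B m * x} := by
    rintro _ ⟨x, hx, rfl⟩
    exact hg2W x hx
  have hrange2set : g2 '' (E : Set (AlgebraicClosure (ZMod p)))
      = {x : AlgebraicClosure (ZMod p) | x ^ q ^ m = B m * x} := by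
    refine Set.eq_of_subset_of_ncard_le hrange2sub ?_ hWfin.1
    refine le_trans hWfin.2 ?_
    rw [← hrange2']
    exact hrange2ge
  have hWcard : Set.ncard {x : AlgebraicClosure (ZMod p) | x ^ q ^ m = B m * x} = q ^ m := by
    refine le_antisymm hWfin.2 ?_
    rw [← hrange2set, ← hrange2']
    exact hrange2ge
  have hcardW : Nat.card Wg = q ^ m := by
    rw [← hWcard]
    exact Nat.card_congr (Equiv.subtypeEquivRight fun x => Iff.rfl)
  -- kernel bound for g1 on W
  have hker1le : Set.ncard {x : AlgebraicClosure (ZMod p) | x ∈ Wg ∧ G1h x = 0}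
      ≤ q ^ (m - 2) := by
    set P : Polynomial (AlgebraicClosure (ZMod p)) :=
      ∑ i ∈ Finset.Icc 1 (m - 1), C (al (m - i) ^ q ^ i) * X ^ q ^ (i - 1) with hP
    have heval : ∀ x, P.eval x = g1 x := by
      intro x
      rw [hP, Polynomial.eval_finset_sum, hg1]
      refine Finset.sum_congr rfl ?_
      intro i _
      simp [hal]
    have hPne : P ≠ 0 := by
      intro h
      have hc := congrArg (fun Q => Polynomial.coeff Q (q ^ (m - 2))) h
      simp only [hP, Polynomial.finset_sum_coeff, coeff_C_mul, coeff_X_pow,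
        Polynomial.coeff_zero] at hc
      have hval : ∀ i ∈ Finset.Icc 1 (m - 1), i ≠ m - 1 →
          al (m - i) ^ q ^ i *
            (if q ^ (m - 2) = q ^ (i - 1) then (1 : AlgebraicClosure (ZMod p))
              else 0) = 0 := by
        intro i hi hine
        rw [Finset.mem_Icc] at hi
        rw [if_neg, mul_zero]
        intro heq
        have h1 := Nat.pow_right_injective hq1 heq
        exact hine (by omega)
      rw [Finset.sum_eq_single_of_mem (m - 1)
        (Finset.mem_Icc.mpr (by omega)) hval] at hc
      rw [if_pos (by rw [show m - 1 - 1 = m - 2 by omega]),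
        show m - (m - 1) = 1 by omega, hal1, one_pow, one_mul] at hc
      exact one_ne_zero hc
    have hdegle : P.natDegree ≤ q ^ (m - 2) := by
      rw [hP]
      refine Polynomial.natDegree_sum_le_of_forall_le _ _ ?_
      intro i hi
      rw [Finset.mem_Icc] at hi
      refine le_trans (natDegree_C_mul_le _ _) ?_
      rw [natDegree_X_pow]
      exact Nat.pow_le_pow_right (by omega) (by omega)
    have h := root_set_card_le P hPne {x | x ∈ Wg ∧ G1h x = 0} ?_
    · exact le_trans h.2 hdegle
    · intro x hx
      rw [heval, ← hG1coe]
      exact hx.2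
  have hmsplit : m = (m - 2) + 2 := by omega
  have hcnt1 := addsubgroup_card_eq Wg (G1h.comp Wg.subtype)
  have hker1' := ker_card_eq_ncard Wg G1h
  have hrange1' := range_card_eq_ncard Wg G1h
  rw [show ⇑G1h = g1 from rfl] at hrange1'
  have hrange1ge : q ^ 2 ≤ Nat.card (G1h.comp Wg.subtype).range := by
    have h1 : q ^ (m - 2) * q ^ 2
        ≤ Nat.card (G1h.comp Wg.subtype).range * q ^ (m - 2) := by
      calc q ^ (m - 2) * q ^ 2 = q ^ m := by rw [← pow_add]; congr 1; omega
      _ = Nat.card (G1h.comp Wg.subtype).range * Nat.card (G1h.comp Wg.subtype).ker := by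
          rw [← hcardW, hcnt1]
      _ ≤ Nat.card (G1h.comp Wg.subtype).range * q ^ (m - 2) := by
          refine Nat.mul_le_mul_left _ ?_
          rw [hker1']
          exact hker1le
    rw [mul_comm] at h1
    exact Nat.le_of_mul_le_mul_right h1 (by positivity)
  have hrange1sub : g1 '' (Wg : Set (AlgebraicClosure (ZMod p)))
      ⊆ {x : AlgebraicClosure (ZMod p) | x ^ q ^ 2 + x ^ q + a * x = 0} := by
    rintro _ ⟨w, hw, rfl⟩
    have hwW : w ^ q ^ m = B m * w := hw
    have h := hLaG1 w
    rw [hwW, sub_self] at h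
    exact h
  have hrange1set : g1 '' (Wg : Set (AlgebraicClosure (ZMod p)))
      = {x : AlgebraicClosure (ZMod p) | x ^ q ^ 2 + x ^ q + a * x = 0} := by
    refine Set.eq_of_subset_of_ncard_le hrange1sub ?_ hVfin
    rw [hVcard, ← hrange1']
    exact hrange1ge
  -- put everything together
  have hVsurj : ∀ v : AlgebraicClosure (ZMod p), v ^ q ^ 2 + v ^ q + a * v = 0 →
      ∃ x : AlgebraicClosure (ZMod p), x ^ q ^ N = x ∧ g1 (g2 x) = v := by
    intro v hv
    have hv' : v ∈ g1 '' (Wg : Set (AlgebraicClosure (ZMod p))) := by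
      rw [hrange1set]; exact hv
    obtain ⟨w, hw, hwv⟩ := hv'
    have hw' : w ∈ g2 '' (E : Set (AlgebraicClosure (ZMod p))) := by
      rw [hrange2set]; exact hw
    obtain ⟨x, hx, hxw⟩ := hw'
    exact ⟨x, hx, by rw [hxw, hwv]⟩
  have hVmem : ∀ x : AlgebraicClosure (ZMod p), x ^ q ^ N = x →
      (g1 (g2 x)) ^ q ^ 2 + (g1 (g2 x)) ^ q + a * g1 (g2 x) = 0 := by
    intro x hx
    have h := hLaG1 (g2 x)
    rw [hg2W x hx, sub_self] at h
    exact h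
  -- the final set equality
  have hexp1 : (q - 1) * (q + 1) + 1 = q ^ 2 := by
    obtain ⟨t, rfl⟩ : ∃ t, q = t + 1 := ⟨q - 1, by omega⟩
    rw [Nat.add_sub_cancel]
    ring
  ext y
  simp only [Set.mem_setOf_eq, Set.mem_diff, Set.mem_singleton_iff]
  constructor
  · intro hy
    have hy0 : y ≠ 0 := by
      intro h
      rw [h, zero_pow (by omega : q + 1 ≠ 0), add_zero, zero_add] at hy
      exact ha0 hy
    obtain ⟨u, hu⟩ := IsAlgClosed.exists_pow_nat_eq y (show 0 < q - 1 by omega)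
    have hu0 : u ≠ 0 := by
      intro h
      rw [h, zero_pow (by omega : q - 1 ≠ 0)] at hu
      exact hy0 hu.symm
    have huq : u ^ q = y * u := by
      rw [← hu, ← pow_succ, show q - 1 + 1 = q by omega]
    have huq2 : u ^ q ^ 2 = (y * u) ^ q := by
      rw [pow_two, pow_mul, huq]
    have huV : u ^ q ^ 2 + u ^ q + a * u = 0 := by
      rw [huq2, mul_pow, huq]
      linear_combination u * hy
    obtain ⟨x, hxE, hxv⟩ := hVsurj u huV
    refine ⟨⟨x, hxE, ?_⟩, hy0⟩
    rw [hxv, hu]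
  · rintro ⟨⟨x, hxE, rfl⟩, hy0⟩
    have huV := hVmem x hxE
    have hu0 : g1 (g2 x) ≠ 0 := by
      intro h
      rw [h, zero_pow (by omega : q - 1 ≠ 0)] at hy0
      exact hy0 rfl
    set u := g1 (g2 x) with hudef
    have hmain : u * ((u ^ (q - 1)) ^ (q + 1) + u ^ (q - 1) + a) = u * 0 := by
      rw [mul_zero, mul_add, mul_add, ← pow_mul]
      calc u * u ^ ((q - 1) * (q + 1)) + u * u ^ (q - 1) + u * a
          = u ^ ((q - 1) * (q + 1) + 1) + u ^ (q - 1 + 1) + a * u := by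
            rw [← pow_succ', ← pow_succ']; ring
      _ = u ^ q ^ 2 + u ^ q + a * u := by
            rw [hexp1, show q - 1 + 1 = q by omega]
      _ = 0 := huV
    exact mul_left_cancel₀ hu0 hmain
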